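/- Let k be an odd integer. Consider n = k(k+3)/2 uniform-size items, (k²+4k−1)/4 white and (k+1)²/4 black, with per-bin capacity κ = k items. Then: (a) there is a feasible packing into (k+1)/2 + 1 bins, and no feasible packing uses fewer bins; (b) the packing consisting of (k+1)/2 full bins each with (k−1)/2 white and (k+1)/2 black items (alternating with black at bottom and top), plus k singleton bins each holding one white item, is a Nash equilibrium using (3k+1)/2 bins. -/

import Mathlib

open Finset

/-- In a uniform-size game, a bin (list of item indices, bottom to top) is
feasible if no two adjacent items share a color and it holds at most `κ` items. -/
def UBinOK {n : ℕ} {C : Type*} (color : Fin n → C) (κ : ℕ) (b : List (Fin n)) : Prop :=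
  (b.map color).Chain' (· ≠ ·) ∧ b.length ≤ κ

/-- A strategy profile is a packing if every item occurs in exactly one bin, once. -/
def IsPacking {n : ℕ} (σ : Fin n → List (Fin n)) : Prop :=
  ∀ i : Fin n, (∑ j : Fin n, ((σ j).count i)) = 1

/-- The number of open (nonempty) bins of a profile. -/
def openBins {n : ℕ} (σ : Fin n → List (Fin n)) : ℕ :=
  (Finset.univ.filter fun j => σ j ≠ []).card

/-- Nash equilibrium of a uniform-size colorful bin packing game (the
egalitarian and proportional cost functions coincide): the profile is a feasible
packing and no item in a bin with `k` items can move to the top of another bin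
feasibly holding it with at least `k` items. -/
def UNE {n : ℕ} {C : Type*} (color : Fin n → C) (κ : ℕ)
    (σ : Fin n → List (Fin n)) : Prop :=
  IsPacking σ ∧ (∀ j, UBinOK color κ (σ j)) ∧
    ∀ (i : Fin n) (j j' : Fin n), j ≠ j' → i ∈ σ j →
      UBinOK color κ (σ j' ++ [i]) → (σ j').length < (σ j).length

namespace PoAaux

/-- Interleaving of two arithmetic progressions of step 1: positions
`0,2,4,...` hold `a, a+1, ...` and positions `1,3,5,...` hold `b, b+1, ...`. -/
def inter (a b : ℕ) : ℕ → List ℕ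
  | 0 => []
  | n+1 => a :: inter b (a+1) n

@[simp] lemma inter_zero (a b : ℕ) : inter a b 0 = [] := rfl
@[simp] lemma inter_succ (a b n : ℕ) : inter a b (n+1) = a :: inter b (a+1) n := rfl

lemma inter_length : ∀ (n a b : ℕ), (inter a b n).length = n := by
  intro n
  induction n with
  | zero => simp
  | succ n ih => intro a b; simp [ih]

lemma inter_count : ∀ (n a b v : ℕ), (inter a b n).count v =
    (if a ≤ v ∧ v < a + (n+1)/2 then 1 else 0) +
    (if b ≤ v ∧ v < b + n/2 then 1 else 0) := by
  intro n
  induction n with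
  | zero => intro a b v; simp; split_ifs <;> omega
  | succ n ih =>
    intro a b v
    rw [inter_succ, List.count_cons, ih]
    simp only [beq_iff_eq]
    split_ifs <;> omega

lemma inter_mem {x a b n : ℕ} (h : x ∈ inter a b n) :
    (a ≤ x ∧ x < a + (n+1)/2) ∨ (b ≤ x ∧ x < b + n/2) := by
  have h0 : 0 < (inter a b n).count x := List.count_pos_iff.mpr h
  rw [inter_count] at h0
  split_ifs at h0 <;> omega

lemma inter_chain' (c : ℕ → Bool) :
    ∀ (n a b : ℕ) (cA cB : Bool), cA ≠ cB →
    (∀ x, a ≤ x → x < a + (n+1)/2 → c x = cA) →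
    (∀ x, b ≤ x → x < b + n/2 → c x = cB) →
    ((inter a b n).map c).Chain' (· ≠ ·) := by
  intro n
  induction n with
  | zero => simp [List.Chain']
  | succ n ih =>
    intro a b cA cB hAB hA hB
    rw [inter_succ, List.map_cons, List.Chain', List.isChain_cons]
    constructor
    · intro y hy
      match n, hy with
      | n+1, hy =>
        simp only [inter_succ, List.map_cons, List.head?_cons, Option.mem_def,
          Option.some.injEq] at hy
        subst hy
        have h1 : c a = cA := hA a le_rfl (by omega)
        have h2 : c b = cB := hB b le_rfl (by omega)
        rw [h1, h2]; exact hAB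
    · exact ih b (a+1) cB cA (Ne.symm hAB)
        (fun x hx hx' => hB x hx (by omega))
        (fun x hx hx' => hA x (by omega) (by omega))

lemma inter_countP (p : ℕ → Bool) :
    ∀ (n a b : ℕ) (cA cB : Bool),
    (∀ x, a ≤ x → x < a + (n+1)/2 → p x = cA) →
    (∀ x, b ≤ x → x < b + n/2 → p x = cB) →
    (inter a b n).countP p =
      (if cA then (n+1)/2 else 0) + (if cB then n/2 else 0) := by
  intro n
  induction n with
  | zero => intro a b cA cB _ _; simp
  | succ n ih =>
    intro a b cA cB hA hB
    rw [inter_succ, List.countP_cons,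
      ih b (a+1) cB cA (fun x hx hx' => hB x hx (by omega))
        (fun x hx hx' => hA x (by omega) (by omega))]
    have hpa : p a = cA := hA a le_rfl (by omega)
    rw [hpa]
    rcases cA <;> rcases cB <;> simp <;> omega

lemma inter_getLast? : ∀ (n a b : ℕ), (inter a b (2*n+1)).getLast? = some (a+n) := by
  intro n
  induction n with
  | zero => intro a b; rfl
  | succ n ih =>
    intro a b
    have h : 2*(n+1)+1 = (2*n+1) + 1 + 1 := by ring
    rw [h, inter_succ, inter_succ, List.getLast?_cons_cons,
      show inter (a+1) (b+1) (2*n+1) = (a+1) :: inter (b+1) (a+2) (2*n) from rfl,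
      List.getLast?_cons_cons, ← inter_succ, ih]
    congr 1
    omega

lemma sum_range_getD {α : Type*} (f : α → ℕ) (d : α) :
    ∀ L : List α, ∑ j ∈ Finset.range L.length, f (L.getD j d) = (L.map f).sum := by
  intro L
  induction L with
  | nil => simp
  | cons x xs ih =>
    rw [List.length_cons, Finset.sum_range_succ']
    simp only [List.getD_cons_succ, List.getD_cons_zero, ih, List.map_cons, List.sum_cons]
    omega

lemma packing_of_count {n : ℕ} (L : List (List (Fin n))) (hlen : L.length ≤ n)
    (h : ∀ i : Fin n, (L.flatten.count i) = 1) :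
    IsPacking (fun j : Fin n => L.getD j.val []) := by
  intro i
  have h2 : ∑ j : Fin n, (L.getD j.val []).count i
      = ∑ j ∈ Finset.range n, (L.getD j []).count i :=
    Fin.sum_univ_eq_sum_range (fun j => (L.getD j []).count i) n
  rw [h2, ← Finset.sum_subset (Finset.range_subset_range.2 hlen)
      (fun x _ hx => by
        rw [List.getD_eq_default _ _ (by simpa using hx)]; simp),
    sum_range_getD, ← List.count_flatten, h i]

lemma openBins_of_list {n : ℕ} (L : List (List (Fin n))) (hlen : L.length ≤ n)
    (hne : ∀ l ∈ L, l ≠ []) :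
    openBins (fun j : Fin n => L.getD j.val []) = L.length := by
  unfold openBins
  have hset : (univ.filter fun j : Fin n => L.getD j.val [] ≠ [])
      = univ.filter fun j : Fin n => j.val < L.length := by
    ext j
    simp only [mem_filter, mem_univ, true_and]
    constructor
    · intro h
      by_contra h'
      push_neg at h'
      exact h (List.getD_eq_default _ _ h')
    · intro h
      rw [List.getD_eq_getElem _ _ h]
      exact hne _ (List.getElem_mem _)
  rw [hset]
  rw [Finset.card_bij' (fun (j : Fin n) _ => (j : ℕ))
      (fun (t : ℕ) (ht : t ∈ Finset.range L.length) =>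
        (⟨t, lt_of_lt_of_le (Finset.mem_range.1 ht) hlen⟩ : Fin n))
      (fun a ha => by simpa using (Finset.mem_filter.1 ha).2)
      (fun a ha => by simpa using Finset.mem_range.1 ha)
      (fun a ha => by simp) (fun a ha => by simp),
    Finset.card_range]

lemma sum_count_eq_length {n : ℕ} (l : List (Fin n)) :
    ∑ i : Fin n, l.count i = l.length := by
  induction l with
  | nil => simp
  | cons x xs ih =>
    simp only [List.count_cons, List.length_cons, Finset.sum_add_distrib, ih, beq_iff_eq]
    have h1 : (∑ x_1 : Fin n, if x = x_1 then 1 else 0) = 1 := by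
      simp [Finset.sum_ite_eq]
    omega

lemma sum_ind (v a d : ℕ) : ∀ t : ℕ,
    (∑ j ∈ Finset.range t, if a + j*d ≤ v ∧ v < a + j*d + d then 1 else 0)
      = if a ≤ v ∧ v < a + t*d then 1 else 0 := by
  intro t
  induction t with
  | zero => simp
  | succ t ih =>
    rw [Finset.sum_range_succ, ih, Nat.succ_mul]
    generalize t*d = s
    split_ifs <;> omega

lemma list_sum_range (f : ℕ → ℕ) : ∀ t : ℕ,
    (((List.range t).map f).sum) = ∑ j ∈ Finset.range t, f j := by
  intro t
  induction t with
  | zero => simp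
  | succ t ih =>
    rw [List.range_succ, List.map_append, List.sum_append, Finset.sum_range_succ, ih]
    simp

/-! ### The constructions -/

/-- Full bin `j` of the Nash equilibrium: blacks `j(r+1), …, j(r+1)+r` at even
positions, whites `(r+1)²+jr, …` at odd positions. -/
def fullNat (r j : ℕ) : List ℕ := inter (j*(r+1)) ((r+1)*(r+1) + j*r) (2*r+1)

/-- The bins of the Nash equilibrium (`k = 2r+1`): `r+1` full bins followed by
`2r+1` singleton white bins. -/
def LbNat (r : ℕ) : List (List ℕ) :=
  (List.range (r+1)).map (fullNat r) ++
  (List.range (2*r+1)).map (fun x => [(r+1)*(r+1) + (r+1)*r + x])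

/-- White-majority bin `j` of the optimal packing. -/
def binA (r j : ℕ) : List ℕ := inter ((r+1)*(r+1) + r + j*(r+1)) ((r+1) + j*r) (2*r+1)

/-- The bins of the optimal packing: one black-majority bin followed by `r+1`
white-majority bins. -/
def LaNat (r : ℕ) : List (List ℕ) :=
  inter 0 ((r+1)*(r+1)) (2*r+1) :: (List.range (r+1)).map (binA r)

lemma LbNat_length (r : ℕ) : (LbNat r).length = 3*r+2 := by
  simp [LbNat]; omega

lemma LaNat_length (r : ℕ) : (LaNat r).length = r+2 := by
  simp [LaNat]

lemma LbNat_count (r v : ℕ) (hv : v < 2*(r*r) + 5*r + 2) :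
    (LbNat r).flatten.count v = 1 := by
  have e1 : (r+1)*(r+1) = r*r+2*r+1 := by ring
  have e2 : (r+1)*r = r*r+r := by ring
  rw [LbNat, List.count_flatten, List.map_append, List.sum_append,
    List.map_map, List.map_map, list_sum_range, list_sum_range]
  have h1 : ∑ j ∈ Finset.range (r+1), (List.count v ∘ fullNat r) j
      = (if 0 ≤ v ∧ v < 0 + (r+1)*(r+1) then 1 else 0) +
        (if (r+1)*(r+1) ≤ v ∧ v < (r+1)*(r+1) + (r+1)*r then 1 else 0) := by
    rw [← sum_ind v 0 (r+1) (r+1), ← sum_ind v ((r+1)*(r+1)) r (r+1),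
      ← Finset.sum_add_distrib]
    apply Finset.sum_congr rfl
    intro j hj
    have hj' : j < r+1 := Finset.mem_range.1 hj
    simp only [Function.comp_apply, fullNat]
    rw [inter_count]
    split_ifs <;> omega
  have h2 : ∑ x ∈ Finset.range (2*r+1),
        (List.count v ∘ fun x => [(r+1)*(r+1) + (r+1)*r + x]) x
      = if (r+1)*(r+1) + (r+1)*r ≤ v ∧
          v < (r+1)*(r+1) + (r+1)*r + (2*r+1)*1 then 1 else 0 := by
    rw [← sum_ind v ((r+1)*(r+1) + (r+1)*r) 1 (2*r+1)]
    apply Finset.sum_congr rfl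
    intro x hx
    simp only [Function.comp_apply, List.count_cons, List.count_nil, beq_iff_eq]
    split_ifs <;> omega
  rw [h1, h2]
  have e3 : (2*r+1)*1 = 2*r+1 := by ring
  split_ifs <;> omega

lemma LaNat_count (r v : ℕ) (hv : v < 2*(r*r) + 5*r + 2) :
    (LaNat r).flatten.count v = 1 := by
  have e1 : (r+1)*(r+1) = r*r+2*r+1 := by ring
  have e2 : (r+1)*r = r*r+r := by ring
  rw [LaNat, List.flatten_cons, List.count_append, List.count_flatten,
    List.map_map, list_sum_range, inter_count]
  have h1 : ∑ j ∈ Finset.range (r+1), (List.count v ∘ binA r) j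
      = (if (r+1)*(r+1) + r ≤ v ∧
            v < (r+1)*(r+1) + r + (r+1)*(r+1) then 1 else 0) +
        (if (r+1) ≤ v ∧ v < (r+1) + (r+1)*r then 1 else 0) := by
    rw [← sum_ind v ((r+1)*(r+1) + r) (r+1) (r+1), ← sum_ind v (r+1) r (r+1),
      ← Finset.sum_add_distrib]
    apply Finset.sum_congr rfl
    intro j hj
    have hj' : j < r+1 := Finset.mem_range.1 hj
    simp only [Function.comp_apply, binA]
    rw [inter_count]
    split_ifs <;> omega
  rw [h1]
  split_ifs <;> omega

lemma LbNat_bound (r : ℕ) : ∀ l ∈ LbNat r, ∀ x ∈ l, x < 2*(r*r)+5*r+2 := by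
  intro l hl x hx
  have e1 : (r+1)*(r+1) = r*r+2*r+1 := by ring
  have e2 : (r+1)*r = r*r+r := by ring
  rw [LbNat, List.mem_append] at hl
  rcases hl with hl | hl
  · obtain ⟨j, hj, rfl⟩ := List.mem_map.1 hl
    have hj' : j < r+1 := List.mem_range.1 hj
    rcases inter_mem hx with ⟨h1, h2⟩ | ⟨h1, h2⟩
    · have h3 : j*(r+1) + (r+1) ≤ (r+1)*(r+1) := by
        calc j*(r+1)+(r+1) = (j+1)*(r+1) := by ring
        _ ≤ (r+1)*(r+1) := Nat.mul_le_mul_right (r+1) (by omega)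
      omega
    · have h3 : j*r + r ≤ (r+1)*r := by
        calc j*r + r = (j+1)*r := by ring
        _ ≤ (r+1)*r := Nat.mul_le_mul_right r (by omega)
      omega
  · obtain ⟨y, hy, rfl⟩ := List.mem_map.1 hl
    have hy' : y < 2*r+1 := List.mem_range.1 hy
    simp only [List.mem_singleton] at hx
    omega

lemma LaNat_bound (r : ℕ) : ∀ l ∈ LaNat r, ∀ x ∈ l, x < 2*(r*r)+5*r+2 := by
  intro l hl x hx
  have e1 : (r+1)*(r+1) = r*r+2*r+1 := by ring
  have e2 : (r+1)*r = r*r+r := by ring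
  rw [LaNat, List.mem_cons] at hl
  rcases hl with rfl | hl
  · rcases inter_mem hx with ⟨h1, h2⟩ | ⟨h1, h2⟩ <;> omega
  · obtain ⟨j, hj, rfl⟩ := List.mem_map.1 hl
    have hj' : j < r+1 := List.mem_range.1 hj
    rcases inter_mem hx with ⟨h1, h2⟩ | ⟨h1, h2⟩
    · have h3 : j*(r+1) + (r+1) ≤ (r+1)*(r+1) := by
        calc j*(r+1)+(r+1) = (j+1)*(r+1) := by ring
        _ ≤ (r+1)*(r+1) := Nat.mul_le_mul_right (r+1) (by omega)
      omega
    · have h3 : j*r + r ≤ (r+1)*r := by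
        calc j*r + r = (j+1)*r := by ring
        _ ≤ (r+1)*r := Nat.mul_le_mul_right r (by omega)
      omega

lemma getD_map_lt {α β : Type*} (f : α → β) (L : List α) (t : ℕ) (ht : t < L.length)
    (d : α) (e : β) : (L.map f).getD t e = f (L.getD t d) := by
  rw [List.getD_eq_getElem _ _ (by simpa using ht), List.getD_eq_getElem _ _ ht,
    List.getElem_map]

lemma LbNat_getD_lt (r t : ℕ) (ht : t < r+1) : (LbNat r).getD t [] = fullNat r t := by
  rw [LbNat, List.getD_eq_getElem _ _ (by simp; omega),
    List.getElem_append_left (by simpa using ht), List.getElem_map, List.getElem_range]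

lemma LbNat_getD_ge (r t : ℕ) (h1 : r+1 ≤ t) (h2 : t < 3*r+2) :
    (LbNat r).getD t [] = [(r+1)*(r+1) + (r+1)*r + (t - (r+1))] := by
  rw [LbNat, List.getD_eq_getElem _ _ (by simp; omega),
    List.getElem_append_right (by simpa using h1), List.getElem_map, List.getElem_range]
  simp

lemma LaNat_getD_zero (r : ℕ) : (LaNat r).getD 0 [] = inter 0 ((r+1)*(r+1)) (2*r+1) := rfl

lemma LaNat_getD_succ (r s : ℕ) (hs : s < r+1) : (LaNat r).getD (s+1) [] = binA r s := by
  rw [LaNat, List.getD_cons_succ,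
    List.getD_eq_getElem _ _ (by simpa using hs), List.getElem_map, List.getElem_range]

/-! ### Chain and color facts -/

section Chains

variable (r : ℕ) (c : ℕ → Bool)
  (hc : ∀ x, x < 2*(r*r)+5*r+2 → c x = decide (x < (r+1)*(r+1)))

include hc

lemma fullNat_chain (j : ℕ) (hj : j < r+1) :
    ((fullNat r j).map c).Chain' (· ≠ ·) := by
  have e1 : (r+1)*(r+1) = r*r+2*r+1 := by ring
  have e2 : (r+1)*r = r*r+r := by ring
  have h3 : j*(r+1) + (r+1) ≤ (r+1)*(r+1) := by
    calc j*(r+1)+(r+1) = (j+1)*(r+1) := by ring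
    _ ≤ (r+1)*(r+1) := Nat.mul_le_mul_right (r+1) (by omega)
  have h4 : j*r + r ≤ (r+1)*r := by
    calc j*r + r = (j+1)*r := by ring
    _ ≤ (r+1)*r := Nat.mul_le_mul_right r (by omega)
  apply inter_chain' c (2*r+1) _ _ true false (by simp)
  · intro x hx hx'
    rw [hc x (by omega)]
    simp only [decide_eq_true_eq]
    omega
  · intro x hx hx'
    rw [hc x (by omega)]
    simp only [decide_eq_false_iff_not, not_lt]
    omega

lemma fullNat_countP (j : ℕ) (hj : j < r+1) :
    (fullNat r j).countP c = r+1 := by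
  have e1 : (r+1)*(r+1) = r*r+2*r+1 := by ring
  have e2 : (r+1)*r = r*r+r := by ring
  have h3 : j*(r+1) + (r+1) ≤ (r+1)*(r+1) := by
    calc j*(r+1)+(r+1) = (j+1)*(r+1) := by ring
    _ ≤ (r+1)*(r+1) := Nat.mul_le_mul_right (r+1) (by omega)
  have h4 : j*r + r ≤ (r+1)*r := by
    calc j*r + r = (j+1)*r := by ring
    _ ≤ (r+1)*r := Nat.mul_le_mul_right r (by omega)
  rw [fullNat, inter_countP c (2*r+1) _ _ true false]
  · simp; omega
  · intro x hx hx'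
    rw [hc x (by omega)]
    simp only [decide_eq_true_eq]
    omega
  · intro x hx hx'
    rw [hc x (by omega)]
    simp only [decide_eq_false_iff_not, not_lt]
    omega

lemma binA0_chain : ((inter 0 ((r+1)*(r+1)) (2*r+1)).map c).Chain' (· ≠ ·) := by
  have e1 : (r+1)*(r+1) = r*r+2*r+1 := by ring
  apply inter_chain' c (2*r+1) _ _ true false (by simp)
  · intro x hx hx'
    rw [hc x (by omega)]
    simp only [decide_eq_true_eq]
    omega
  · intro x hx hx'
    rw [hc x (by omega)]
    simp only [decide_eq_false_iff_not, not_lt]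
    omega

lemma binA_chain (j : ℕ) (hj : j < r+1) : ((binA r j).map c).Chain' (· ≠ ·) := by
  have e1 : (r+1)*(r+1) = r*r+2*r+1 := by ring
  have e2 : (r+1)*r = r*r+r := by ring
  have h3 : j*(r+1) + (r+1) ≤ (r+1)*(r+1) := by
    calc j*(r+1)+(r+1) = (j+1)*(r+1) := by ring
    _ ≤ (r+1)*(r+1) := Nat.mul_le_mul_right (r+1) (by omega)
  have h4 : j*r + r ≤ (r+1)*r := by
    calc j*r + r = (j+1)*r := by ring
    _ ≤ (r+1)*r := Nat.mul_le_mul_right r (by omega)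
  apply inter_chain' c (2*r+1) _ _ false true (by simp)
  · intro x hx hx'
    rw [hc x (by omega)]
    simp only [decide_eq_false_iff_not, not_lt]
    omega
  · intro x hx hx'
    rw [hc x (by omega)]
    simp only [decide_eq_true_eq]
    omega

end Chains

lemma fullNat_head (r j : ℕ) : (fullNat r j).head? = some (j*(r+1)) := by
  rw [fullNat, inter_succ, List.head?_cons]

lemma fullNat_last (r j : ℕ) : (fullNat r j).getLast? = some (j*(r+1) + r) :=
  inter_getLast? r _ _

lemma fullNat_length (r j : ℕ) : (fullNat r j).length = 2*r+1 := inter_length _ _ _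

lemma binA_length (r j : ℕ) : (binA r j).length = 2*r+1 := inter_length _ _ _

theorem aux_main (r N : ℕ) (hN : N = 2*(r*r) + 5*r + 2) (color : Fin N → Bool)
    (hcolor : ∀ i : Fin N, color i = decide (i.val < (r+1)*(r+1))) :
    ((∃ σ : Fin N → List (Fin N),
        IsPacking σ ∧ (∀ j, UBinOK color (2*r+1) (σ j)) ∧
        openBins σ = r + 1 + 1) ∧
      (∀ τ : Fin N → List (Fin N),
        IsPacking τ → (∀ j, UBinOK color (2*r+1) (τ j)) →
        r + 1 + 1 ≤ openBins τ)) ∧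
    (∃ σ : Fin N → List (Fin N),
      UNE color (2*r+1) σ ∧ openBins σ = 3*r+2 ∧
      ∀ l, σ l ≠ [] →
        ((σ l).length = 2*r+1 ∧ ((σ l).countP fun i => color i) = r+1 ∧
          ((σ l).head?).map color = some true ∧
          ((σ l).getLast?).map color = some true) ∨
        (∃ i, σ l = [i] ∧ color i = false)) := by
  classical
  have hN0 : 0 < N := by omega
  set emb : ℕ → Fin N := fun x => ⟨x % N, Nat.mod_lt x hN0⟩ with hembdef
  have hval : ∀ x, x < N → (emb x).val = x := fun x hx => Nat.mod_eq_of_lt hx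
  have hcolE : ∀ x, x < N → color (emb x) = decide (x < (r+1)*(r+1)) := by
    intro x hx
    rw [hcolor (emb x), hval x hx]
  have hcolE' : ∀ x, x < 2*(r*r)+5*r+2 → color (emb x) = decide (x < (r+1)*(r+1)) :=
    fun x hx => hcolE x (by omega)
  have e1 : (r+1)*(r+1) = r*r+2*r+1 := by ring
  have e2 : (r+1)*r = r*r+r := by ring
  -- transfer of the count-1 property to the Fin level
  have hkey : ∀ (LN : List (List ℕ)), (∀ l ∈ LN, ∀ x ∈ l, x < N) →
      (∀ v, v < N → LN.flatten.count v = 1) →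
      ∀ i : Fin N, (((LN.map (List.map emb)).flatten).count i) = 1 := by
    intro LN hb hc i
    rw [← List.map_flatten]
    have h1 : (LN.flatten.map emb).map Fin.val = LN.flatten := by
      rw [List.map_map]
      have h2 : ∀ x ∈ LN.flatten, (Fin.val ∘ emb) x = id x := by
        intro x hx
        obtain ⟨l, hl, hxl⟩ := List.mem_flatten.1 hx
        exact hval x (hb l hl x hxl)
      rw [List.map_congr_left h2, List.map_id]
    rw [← List.count_map_of_injective _ Fin.val Fin.val_injective i, h1]
    exact hc i.val i.isLt
  constructor
  · constructor
    · -- part (a) upper bound: the optimal packing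
      refine ⟨fun j => ((LaNat r).map (List.map emb)).getD j.val [], ?_, ?_, ?_⟩
      · exact packing_of_count _ (by rw [List.length_map, LaNat_length]; omega)
          (hkey (LaNat r) (fun l hl x hx => by
              have := LaNat_bound r l hl x hx; omega)
            (fun v hv => LaNat_count r v (by omega)))
      · intro j
        show UBinOK color (2*r+1) (((LaNat r).map (List.map emb)).getD j.val [])
        rcases Nat.lt_or_ge j.val (r+2) with h | h
        · rw [getD_map_lt (List.map emb) _ _ (by rw [LaNat_length]; omega) []]
          obtain ⟨l0, hl0mem, hl0eq⟩ :
              ∃ l0, l0 ∈ LaNat r ∧ (LaNat r).getD j.val [] = l0 :=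
            ⟨_, by
              rw [List.getD_eq_getElem _ _ (by rw [LaNat_length]; omega)]
              exact List.getElem_mem _, rfl⟩
          rw [hl0eq]
          rw [LaNat, List.mem_cons] at hl0mem
          constructor
          · rw [List.map_map]
            rcases hl0mem with hm | hm
            · rw [hm]
              exact binA0_chain r _ hcolE'
            · obtain ⟨j', hj', rfl⟩ := List.mem_map.1 hm
              exact binA_chain r _ hcolE' j' (List.mem_range.1 hj')
          · rw [List.length_map]
            rcases hl0mem with hm | hm
            · rw [hm, inter_length]
            · obtain ⟨j', hj', rfl⟩ := List.mem_map.1 hm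
              rw [binA_length]
        · rw [List.getD_eq_default _ _ (by rw [List.length_map, LaNat_length]; omega)]
          exact ⟨by simp [List.Chain'], by simp⟩
      · rw [openBins_of_list _ (by rw [List.length_map, LaNat_length]; omega)]
        · rw [List.length_map, LaNat_length]
        · intro l hl
          obtain ⟨l', hl', rfl⟩ := List.mem_map.1 hl
          have hlen' : l'.length = 2*r+1 := by
            rw [LaNat, List.mem_cons] at hl'
            rcases hl' with hm | hm
            · rw [hm, inter_length]
            · obtain ⟨j', hj', rfl⟩ := List.mem_map.1 hm
              exact binA_length r j'
          intro hcon
          rw [← List.length_eq_zero_iff, List.length_map, hlen'] at hcon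
          omega
    · -- part (a) lower bound
      intro τ hpack hfeas
      have hsum : ∑ j : Fin N, (τ j).length = N := by
        have h1 : ∀ j : Fin N, (τ j).length = ∑ i : Fin N, (τ j).count i :=
          fun j => (sum_count_eq_length (τ j)).symm
        calc ∑ j : Fin N, (τ j).length = ∑ j : Fin N, ∑ i : Fin N, (τ j).count i :=
              Finset.sum_congr rfl (fun j _ => h1 j)
        _ = ∑ i : Fin N, ∑ j : Fin N, (τ j).count i := Finset.sum_comm
        _ = ∑ i : Fin N, 1 := Finset.sum_congr rfl (fun i _ => hpack i)
        _ = N := by simp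
      have hbound : N ≤ (openBins τ) * (2*r+1) := by
        have h2 : ∑ j ∈ (univ.filter fun j : Fin N => τ j ≠ []), (τ j).length
            = ∑ j : Fin N, (τ j).length :=
          Finset.sum_filter_of_ne (fun x _ hx => by
            intro hcon; rw [hcon] at hx; simp at hx)
        have h3 : ∑ j ∈ (univ.filter fun j : Fin N => τ j ≠ []), (τ j).length
            ≤ (univ.filter fun j : Fin N => τ j ≠ []).card * (2*r+1) := by
          have h4 := Finset.sum_le_card_nsmul (univ.filter fun j : Fin N => τ j ≠ [])
            (fun j => (τ j).length) (2*r+1) (fun x _ => (hfeas x).2)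
          simpa using h4
        rw [h2, hsum] at h3
        exact h3
      by_contra hcon
      push_neg at hcon
      have h4 : openBins τ ≤ r+1 := by omega
      have h5 : (openBins τ) * (2*r+1) ≤ (r+1) * (2*r+1) :=
        Nat.mul_le_mul_right _ h4
      have h6 : (r+1) * (2*r+1) = 2*(r*r) + 3*r + 1 := by ring
      omega
  · -- part (b): the Nash equilibrium
    set Lb : List (List (Fin N)) := (LbNat r).map (List.map emb) with hLbdef
    have hLbLen : Lb.length = 3*r+2 := by rw [hLbdef, List.length_map, LbNat_length]
    have hσb1 : ∀ t : ℕ, t < r+1 → Lb.getD t [] = (fullNat r t).map emb := by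
      intro t ht
      rw [hLbdef, getD_map_lt (List.map emb) _ _ (by rw [LbNat_length]; omega) [],
        LbNat_getD_lt r _ ht]
    have hσb2 : ∀ t : ℕ, r+1 ≤ t → t < 3*r+2 →
        Lb.getD t [] = [emb ((r+1)*(r+1) + (r+1)*r + (t - (r+1)))] := by
      intro t h1 h2
      rw [hLbdef, getD_map_lt (List.map emb) _ _ (by rw [LbNat_length]; omega) [],
        LbNat_getD_ge r _ h1 h2]
      simp
    have hσb3 : ∀ t : ℕ, 3*r+2 ≤ t → Lb.getD t [] = [] := fun t ht =>
      List.getD_eq_default _ _ (by rw [hLbLen]; omega)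
    have hwhite : ∀ t : ℕ, r+1 ≤ t → t < 3*r+2 →
        color (emb ((r+1)*(r+1) + (r+1)*r + (t - (r+1)))) = false := by
      intro t h1 h2
      rw [hcolE _ (by omega)]
      simp only [decide_eq_false_iff_not, not_lt]
      omega
    refine ⟨fun j => Lb.getD j.val [], ⟨?_, ?_, ?_⟩, ?_, ?_⟩
    · -- packing
      exact packing_of_count Lb (by rw [hLbLen]; omega)
        (fun i => by
          rw [hLbdef]
          exact hkey (LbNat r) (fun l hl x hx => by
              have := LbNat_bound r l hl x hx; omega)
            (fun v hv => LbNat_count r v (by omega)) i)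
    · -- feasibility
      intro j
      show UBinOK color (2*r+1) (Lb.getD j.val [])
      rcases Nat.lt_or_ge j.val (r+1) with h | h
      · rw [hσb1 j.val h]
        constructor
        · rw [List.map_map]
          exact fullNat_chain r _ hcolE' j.val h
        · rw [List.length_map, fullNat_length]
      rcases Nat.lt_or_ge j.val (3*r+2) with h' | h'
      · rw [hσb2 j.val h h']
        exact ⟨List.isChain_singleton _, by simp⟩
      · rw [hσb3 j.val h']
        exact ⟨by simp [List.Chain'], by simp⟩
    · -- Nash condition
      intro i j j' hjj' hi hOK
      simp only at hi hOK ⊢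
      rcases Nat.lt_or_ge j.val (r+1) with h | h
      · -- a full bin: nothing can be added to any bin of length ≥ 2r+1
        rw [hσb1 j.val h]
        have h5 := hOK.2
        rw [List.length_append] at h5
        rw [List.length_map, fullNat_length]
        simp only [List.length_singleton] at h5
        omega
      rcases Nat.lt_or_ge j.val (3*r+2) with h' | h'
      · -- singleton white bin
        rw [hσb2 j.val h h'] at hi ⊢
        simp only [List.mem_singleton] at hi
        subst hi
        simp only [List.length_singleton]
        rcases Nat.lt_or_ge j'.val (r+1) with g | g
        · exfalso
          have h5 := hOK.2
          rw [hσb1 j'.val g, List.length_append, List.length_map, fullNat_length] at h5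
          simp only [List.length_singleton] at h5
          omega
        rcases Nat.lt_or_ge j'.val (3*r+2) with g' | g'
        · exfalso
          have h5 := hOK.1
          rw [hσb2 j'.val g g'] at h5
          simp only [List.cons_append, List.nil_append, List.map_cons, List.map_nil,
            List.Chain', List.isChain_pair] at h5
          exact h5 (by rw [hwhite j'.val g g', hwhite j.val h h'])
        · rw [hσb3 j'.val g']
          simp
      · rw [hσb3 j.val h'] at hi
        simp at hi
    · -- number of open bins
      rw [openBins_of_list Lb (by rw [hLbLen]; omega) ?_, hLbLen]
      intro l hl
      rw [hLbdef] at hl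
      obtain ⟨l', hl', rfl⟩ := List.mem_map.1 hl
      have hne : l' ≠ [] := by
        rw [LbNat, List.mem_append] at hl'
        rcases hl' with hm | hm
        · obtain ⟨j', hj', rfl⟩ := List.mem_map.1 hm
          intro hcon
          have h7 := fullNat_length r j'
          rw [hcon] at h7
          simp at h7
        · obtain ⟨y, hy, rfl⟩ := List.mem_map.1 hm
          simp
      simpa using hne
    · -- shape of the open bins
      intro l hl
      simp only at hl ⊢
      rcases Nat.lt_or_ge l.val (r+1) with h | h
      · left
        rw [hσb1 l.val h]
        have h3 : l.val*(r+1)+(r+1) ≤ (r+1)*(r+1) := by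
          calc l.val*(r+1)+(r+1) = (l.val+1)*(r+1) := by ring
          _ ≤ (r+1)*(r+1) := Nat.mul_le_mul_right (r+1) (by omega)
        refine ⟨by rw [List.length_map, fullNat_length], ?_, ?_, ?_⟩
        · rw [List.countP_map]
          exact fullNat_countP r _ (fun x hx => hcolE' x hx) l.val h
        · rw [List.head?_map, fullNat_head, Option.map_some, Option.map_some,
            hcolE' _ (by omega)]
          simp only [Option.some.injEq, decide_eq_true_eq]
          omega
        · rw [List.getLast?_map, fullNat_last, Option.map_some, Option.map_some,
            hcolE' _ (by omega)]
          simp only [Option.some.injEq, decide_eq_true_eq]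
          omega
      rcases Nat.lt_or_ge l.val (3*r+2) with h' | h'
      · right
        exact ⟨_, hσb2 l.val h h', hwhite l.val h h'⟩
      · exact absurd (hσb3 l.val h') hl

end PoAaux

theorem PoA_uniform_odd_construction (k : ℕ) (hk : Odd k)
    (color : Fin (k * (k + 3) / 2) → Bool)
    (hcolor : ∀ i, color i = decide (i.val < (k + 1) ^ 2 / 4)) :
    ((∃ σ : Fin (k * (k + 3) / 2) → List (Fin (k * (k + 3) / 2)),
        IsPacking σ ∧ (∀ j, UBinOK color k (σ j)) ∧
        openBins σ = (k + 1) / 2 + 1) ∧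
      (∀ τ : Fin (k * (k + 3) / 2) → List (Fin (k * (k + 3) / 2)),
        IsPacking τ → (∀ j, UBinOK color k (τ j)) →
        (k + 1) / 2 + 1 ≤ openBins τ)) ∧
    (∃ σ : Fin (k * (k + 3) / 2) → List (Fin (k * (k + 3) / 2)),
      UNE color k σ ∧ openBins σ = (3 * k + 1) / 2 ∧
      ∀ l, σ l ≠ [] →
        ((σ l).length = k ∧ ((σ l).countP fun i => color i) = (k + 1) / 2 ∧
          ((σ l).head?).map color = some true ∧
          ((σ l).getLast?).map color = some true) ∨
        (∃ i, σ l = [i] ∧ color i = false)) := by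
  obtain ⟨r, hr⟩ := hk
  subst hr
  have hN : (2*r+1) * ((2*r+1) + 3) / 2 = 2*(r*r) + 5*r + 2 := by
    have h : (2*r+1) * ((2*r+1)+3) = (2*(r*r)+5*r+2) * 2 := by ring
    omega
  have hB : (2*r+1 + 1)^2/4 = (r+1)*(r+1) := by
    have h : (2*r+1+1)^2 = ((r+1)*(r+1)) * 4 := by ring
    omega
  have hcolor' : ∀ i : Fin ((2*r+1) * ((2*r+1)+3)/2),
      color i = decide (i.val < (r+1)*(r+1)) := by
    intro i
    rw [hcolor i, hB]
  have H := PoAaux.aux_main r ((2*r+1) * ((2*r+1)+3)/2) hN color hcolor'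
  have g2 : (3*(2*r+1)+1)/2 = 3*r+2 := by omega
  have g3 : (2*r+1+1)/2 = r+1 := by omega
  rw [g2, g3]
  exact H
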